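/- There exists a constant C > 0, depending only on sup|f| and sup|f'|, with the following property: for every ν > 0, every λ ≥ C·(1 + ν² + ν^{-2}), every y : ℝ → ℝ continuously differentiable with y, y' square-integrable and y(x) → 0 as |x| → ∞, and every z : ℝ → ℝ twice continuously differentiable with z, z', z'' square-integrable, z(x) → 0 and z'(x) → 0 as |x| → ∞, satisfying ν·z − z'' = y on ℝ, one has (λ − ν²)·∫_ℝ y·z dx − ∫_ℝ f·y'·z dx + ν·∫_ℝ y² dx ≥ (ν/2)·∫_ℝ y² dx. -/

import Mathlib

open MeasureTheory Filter

lemma integrable_mul_L2 {u v : ℝ → ℝ} (hu : MemLp u 2 (volume : Measure ℝ))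
    (hv : MemLp v 2 (volume : Measure ℝ)) :
    Integrable (fun x => u x * v x) (volume : Measure ℝ) := by
  have hgint : Integrable (fun x => u x ^ 2 + v x ^ 2) (volume : Measure ℝ) :=
    hu.integrable_sq.add hv.integrable_sq
  refine Integrable.mono' hgint
    (hu.aestronglyMeasurable.mul hv.aestronglyMeasurable) (ae_of_all _ fun x => ?_)
  rw [Real.norm_eq_abs, abs_mul]
  nlinarith [sq_abs (u x), sq_abs (v x), sq_nonneg (|u x| - |v x|), abs_nonneg (u x), abs_nonneg (v x)]

lemma integral_deriv_eq_zero' {g g' : ℝ → ℝ} (hg : ∀ x, HasDerivAt g (g' x) x)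
    (hint : Integrable g' (volume : Measure ℝ)) (hlim : Tendsto g (cocompact ℝ) (nhds 0)) :
    ∫ x : ℝ, g' x = 0 := by
  have hTop : Tendsto g atTop (nhds 0) :=
    hlim.mono_left (by rw [cocompact_eq_atBot_atTop]; exact le_sup_right)
  have hBot : Tendsto g atBot (nhds 0) :=
    hlim.mono_left (by rw [cocompact_eq_atBot_atTop]; exact le_sup_left)
  have h1 := integral_Iic_of_hasDerivAt_of_tendsto' (a := 0) (fun x _ => hg x)
    hint.integrableOn hBot
  have h2 := integral_Ioi_of_hasDerivAt_of_tendsto' (a := 0) (fun x _ => hg x)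
    hint.integrableOn hTop
  have h3 := intervalIntegral.integral_Iic_add_Ioi (b := (0:ℝ)) hint.integrableOn hint.integrableOn
  linarith

lemma key_bound {d a u v ν : ℝ} (hν : 0 < ν) (hd : |d| ≤ a) :
    -(d * u * v) ≤ ν/8 * u^2 + (2*a^2/ν) * v^2 := by
  have h1 : -(d*u*v) ≤ a * (|u| * |v|) := by
    calc -(d*u*v) ≤ |d*u*v| := neg_le_abs _
    _ = |d| * (|u| * |v|) := by rw [abs_mul, abs_mul, mul_assoc]
    _ ≤ a * (|u| * |v|) := mul_le_mul_of_nonneg_right hd (by positivity)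
  have h2 : a * (|u| * |v|) ≤ ν/8 * u^2 + (2*a^2/ν) * v^2 := by
    rw [show ν/8 * u^2 + (2*a^2/ν) * v^2 = (ν^2*u^2 + 16*a^2*v^2)/(8*ν) by field_simp; ring,
      le_div_iff₀ (by positivity)]
    nlinarith [sq_nonneg (ν*|u| - 4*a*|v|), sq_abs u, sq_abs v]
  linarith

lemma lam_bound {a b ν lam : ℝ} (hν : 0 < ν)
    (hlam : (1 + 2*a^2 + 2*b^2) * (1 + ν^2 + ν⁻¹^2) ≤ lam) :
    ν^2 + 2*a^2/ν^2 + 2*b^2/ν ≤ lam := by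
  refine le_trans ?_ hlam
  rw [div_eq_mul_inv, div_eq_mul_inv, ← inv_pow]
  have htν : ν * ν⁻¹ = 1 := mul_inv_cancel₀ hν.ne'
  nlinarith [mul_nonneg (sq_nonneg a) (sq_nonneg ν), mul_nonneg (sq_nonneg b) (sq_nonneg ν),
    mul_nonneg (sq_nonneg b) (sq_nonneg (ν⁻¹ - 1)), mul_nonneg (sq_nonneg a) (sq_nonneg ν⁻¹),
    sq_nonneg ν⁻¹, sq_nonneg a, sq_nonneg b]

lemma final_arith {ν lam a b P Q R S : ℝ} (hν : 0 < ν) (hP : 0 ≤ P) (hQ : 0 ≤ Q) (hR : 0 ≤ R)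
    (hlam2 : ν^2 + 2*a^2/ν^2 + 2*b^2/ν ≤ lam)
    (hbound : S ≤ ν/4*P + (2*a^2/ν)*Q + (2*b^2/ν)*R) :
    ν/2*P ≤ (lam - ν^2) * (ν*Q + R) - S + ν*P := by
  have hA : (0:ℝ) ≤ 2*a^2/ν^2 := by positivity
  have hB : (0:ℝ) ≤ 2*b^2/ν := by positivity
  have hKB : 2*b^2/ν ≤ lam - ν^2 := by linarith
  have hKA : 2*a^2/ν ≤ (lam - ν^2) * ν := by
    have h1 : 2*a^2/ν^2 ≤ lam - ν^2 := by linarith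
    have h2 := mul_le_mul_of_nonneg_right h1 hν.le
    calc 2*a^2/ν = (2*a^2/ν^2) * ν := by field_simp
      _ ≤ (lam - ν^2) * ν := h2
  have e : (lam - ν^2) * (ν*Q + R) = ((lam - ν^2)*ν) * Q + (lam - ν^2) * R := by ring
  have k1 := mul_le_mul_of_nonneg_right hKA hQ
  have k2 := mul_le_mul_of_nonneg_right hKB hR
  have k3 : 0 ≤ ν * P := mul_nonneg hν.le hP
  rw [e]
  linarith

theorem coercivity_estimate (Mf Mf' : ℝ) :
    ∃ C : ℝ, 0 < C ∧
      ∀ (f : ℝ → ℝ), ContDiff ℝ 1 f → (∀ x : ℝ, |f x| ≤ Mf) →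
        (∀ x : ℝ, |deriv f x| ≤ Mf') →
      ∀ (ν : ℝ), 0 < ν → ∀ (lam : ℝ), C * (1 + ν ^ 2 + ν⁻¹ ^ 2) ≤ lam →
      ∀ (y : ℝ → ℝ), ContDiff ℝ 1 y →
        MemLp y 2 (volume : Measure ℝ) →
        MemLp (deriv y) 2 (volume : Measure ℝ) →
        Tendsto y (cocompact ℝ) (nhds 0) →
      ∀ (z : ℝ → ℝ), ContDiff ℝ 2 z →
        MemLp z 2 (volume : Measure ℝ) →
        MemLp (deriv z) 2 (volume : Measure ℝ) →
        MemLp (deriv (deriv z)) 2 (volume : Measure ℝ) →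
        Tendsto z (cocompact ℝ) (nhds 0) →
        Tendsto (deriv z) (cocompact ℝ) (nhds 0) →
        (∀ x : ℝ, ν * z x - deriv (deriv z) x = y x) →
      (ν / 2) * (∫ x : ℝ, y x ^ 2) ≤
        (lam - ν ^ 2) * (∫ x : ℝ, y x * z x) - (∫ x : ℝ, f x * deriv y x * z x) +
          ν * (∫ x : ℝ, y x ^ 2) := by
  set a : ℝ := |Mf'| + 1 with ha_def
  set b : ℝ := |Mf| + 1 with hb_def
  have ha : 0 < a := by positivity
  have hb : 0 < b := by positivity
  refine ⟨1 + 2*a^2 + 2*b^2, by positivity, ?_⟩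
  intro f hf hfM hf'M ν hν lam hlam y hy hy2 hy'2 hyt z hz hz2 hz'2 hz''2 hzt hz't hzy
  -- basic differentiability / continuity
  have hfd : Differentiable ℝ f := hf.differentiable one_ne_zero
  have hyd : Differentiable ℝ y := hy.differentiable one_ne_zero
  have hzd : Differentiable ℝ z := hz.differentiable two_ne_zero
  have hz1 : ContDiff ℝ 1 (deriv z) :=
    (contDiff_succ_iff_deriv.mp (show ContDiff ℝ (1+1) z by norm_num; exact hz)).2.2
  have hz'd : Differentiable ℝ (deriv z) := hz1.differentiable one_ne_zero
  have hf'c : Continuous (deriv f) := hf.continuous_deriv le_rfl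
  -- bounds on |f|, |deriv f| by b, a
  have hfb : ∀ x, |f x| ≤ b :=
    fun x => (hfM x).trans (by rw [hb_def]; nlinarith [le_abs_self Mf])
  have hf'b : ∀ x, |deriv f x| ≤ a :=
    fun x => (hf'M x).trans (by rw [ha_def]; nlinarith [le_abs_self Mf'])
  -- integrabilities
  have izz : Integrable (fun x => z x * z x) volume := integrable_mul_L2 hz2 hz2
  have izz'' : Integrable (fun x => z x * deriv (deriv z) x) volume := integrable_mul_L2 hz2 hz''2
  have iz'z' : Integrable (fun x => deriv z x * deriv z x) volume := integrable_mul_L2 hz'2 hz'2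
  have iyz : Integrable (fun x => y x * z x) volume := integrable_mul_L2 hy2 hz2
  have iy'z : Integrable (fun x => deriv y x * z x) volume := integrable_mul_L2 hy'2 hz2
  have iyz' : Integrable (fun x => y x * deriv z x) volume := integrable_mul_L2 hy2 hz'2
  have i1 : Integrable (fun x => deriv f x * y x * z x) volume := by
    have := iyz.bdd_mul (c := a) hf'c.aestronglyMeasurable
      (ae_of_all _ fun x => by simpa [Real.norm_eq_abs] using hf'b x)
    simpa [mul_assoc] using this
  have i2 : Integrable (fun x => f x * deriv y x * z x) volume := by
    have := iy'z.bdd_mul (c := b) hf.continuous.aestronglyMeasurable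
      (ae_of_all _ fun x => by simpa [Real.norm_eq_abs] using hfb x)
    simpa [mul_assoc] using this
  have i3 : Integrable (fun x => f x * y x * deriv z x) volume := by
    have := iyz'.bdd_mul (c := b) hf.continuous.aestronglyMeasurable
      (ae_of_all _ fun x => by simpa [Real.norm_eq_abs] using hfb x)
    simpa [mul_assoc] using this
  have i12 : Integrable (fun x => deriv f x * y x * z x + f x * deriv y x * z x) volume :=
    i1.add i2
  have i123 : Integrable
      (fun x => (deriv f x * y x * z x + f x * deriv y x * z x) + f x * y x * deriv z x) volume :=
    i12.add i3
  have i1n : Integrable (fun x => -(deriv f x * y x * z x)) volume := i1.neg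
  have ilhs : Integrable (fun x => -(deriv f x * y x * z x) - f x * y x * deriv z x) volume :=
    i1n.sub i3
  have iy2 : Integrable (fun x => ν/4 * y x ^ 2) volume := hy2.integrable_sq.const_mul _
  have iz2 : Integrable (fun x => (2*a^2/ν) * z x ^ 2) volume := hz2.integrable_sq.const_mul _
  have iz'2 : Integrable (fun x => (2*b^2/ν) * deriv z x ^ 2) volume :=
    hz'2.integrable_sq.const_mul _
  have iyz2 : Integrable (fun x => ν/4 * y x ^ 2 + (2*a^2/ν) * z x ^ 2) volume := iy2.add iz2
  have irhs : Integrable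
      (fun x => (ν/4 * y x ^ 2 + (2*a^2/ν) * z x ^ 2) + (2*b^2/ν) * deriv z x ^ 2) volume :=
    iyz2.add iz'2
  -- first integration by parts:  ∫ (z'^2 + z z'') = 0
  have iadd1 : Integrable (fun x => deriv z x * deriv z x + z x * deriv (deriv z) x) volume :=
    iz'z'.add izz''
  have hIBP1 : ∫ x : ℝ, (deriv z x * deriv z x + z x * deriv (deriv z) x) = 0 := by
    apply integral_deriv_eq_zero' (g := fun x => z x * deriv z x)
    · intro x
      exact (hzd x).hasDerivAt.mul (hz'd x).hasDerivAt
    · exact iadd1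
    · simpa using hzt.mul hz't
  have hzz'' : ∫ x : ℝ, z x * deriv (deriv z) x = - ∫ x : ℝ, deriv z x ^ 2 := by
    rw [integral_add iz'z' izz''] at hIBP1
    have h : ∫ x : ℝ, deriv z x * deriv z x = ∫ x : ℝ, deriv z x ^ 2 := by
      congr 1; funext x; ring
    rw [h] at hIBP1
    linarith
  -- ∫ y z = ν ∫ z² + ∫ z'²
  have hIyz : ∫ x : ℝ, y x * z x = ν * (∫ x : ℝ, z x ^ 2) + ∫ x : ℝ, deriv z x ^ 2 := by
    calc ∫ x : ℝ, y x * z x = ∫ x : ℝ, (ν * (z x * z x) - z x * deriv (deriv z) x) := by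
          congr 1; funext x; rw [← hzy x]; ring
      _ = ν * (∫ x : ℝ, z x * z x) - ∫ x : ℝ, z x * deriv (deriv z) x := by
          rw [integral_sub (izz.const_mul ν) izz'', integral_const_mul]
      _ = ν * (∫ x : ℝ, z x ^ 2) + ∫ x : ℝ, deriv z x ^ 2 := by
          rw [hzz'']
          have h : ∫ x : ℝ, z x * z x = ∫ x : ℝ, z x ^ 2 := by congr 1; funext x; ring
          rw [h]; ring
  -- second integration by parts for f y z
  have hIBP2 : ∫ x : ℝ,
      ((deriv f x * y x * z x + f x * deriv y x * z x) + f x * y x * deriv z x) = 0 := by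
    apply integral_deriv_eq_zero' (g := fun x => f x * y x * z x)
    · intro x
      have h := ((hfd x).hasDerivAt.mul (hyd x).hasDerivAt).mul (hzd x).hasDerivAt
      refine h.congr_deriv ?_; simp only [Pi.mul_apply]; ring
    · exact i123
    · have h0 : Tendsto (fun x => y x * z x) (cocompact ℝ) (nhds 0) := by
        simpa using hyt.mul hzt
      have hto : Tendsto (fun x => b * ‖y x * z x‖) (cocompact ℝ) (nhds 0) := by
        simpa using h0.norm.const_mul b
      refine squeeze_zero_norm (fun x => ?_) hto
      rw [Real.norm_eq_abs, Real.norm_eq_abs, mul_assoc, abs_mul]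
      exact mul_le_mul_of_nonneg_right (hfb x) (abs_nonneg _)
  have hS : ∫ x : ℝ, f x * deriv y x * z x =
      - (∫ x : ℝ, deriv f x * y x * z x) - ∫ x : ℝ, f x * y x * deriv z x := by
    rw [integral_add i12 i3, integral_add i1 i2] at hIBP2
    linarith
  -- pointwise bound and integral mono
  have hPpos : (0:ℝ) ≤ ∫ x : ℝ, y x ^ 2 := integral_nonneg fun x => sq_nonneg _
  have hQpos : (0:ℝ) ≤ ∫ x : ℝ, z x ^ 2 := integral_nonneg fun x => sq_nonneg _
  have hRpos : (0:ℝ) ≤ ∫ x : ℝ, deriv z x ^ 2 := integral_nonneg fun x => sq_nonneg _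
  have hmono : ∫ x : ℝ, (-(deriv f x * y x * z x) - f x * y x * deriv z x) ≤
      ∫ x : ℝ, ((ν/4 * y x ^ 2 + (2*a^2/ν) * z x ^ 2) + (2*b^2/ν) * deriv z x ^ 2) := by
    refine integral_mono ilhs irhs fun x => ?_
    have k1 := key_bound (d := deriv f x) (u := y x) (v := z x) hν (hf'b x)
    have k2 := key_bound (d := f x) (u := y x) (v := deriv z x) hν (hfb x)
    dsimp only
    linarith
  have hbound : ∫ x : ℝ, f x * deriv y x * z x ≤
      ν/4 * (∫ x : ℝ, y x ^ 2) + (2*a^2/ν) * (∫ x : ℝ, z x ^ 2)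
        + (2*b^2/ν) * (∫ x : ℝ, deriv z x ^ 2) := by
    rw [hS]
    have e1 : ∫ x : ℝ, (-(deriv f x * y x * z x) - f x * y x * deriv z x) =
        - (∫ x : ℝ, deriv f x * y x * z x) - ∫ x : ℝ, f x * y x * deriv z x := by
      rw [integral_sub i1n i3, integral_neg]
    have e2 : ∫ x : ℝ, ((ν/4 * y x ^ 2 + (2*a^2/ν) * z x ^ 2) + (2*b^2/ν) * deriv z x ^ 2) =
        ν/4 * (∫ x : ℝ, y x ^ 2) + (2*a^2/ν) * (∫ x : ℝ, z x ^ 2)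
          + (2*b^2/ν) * (∫ x : ℝ, deriv z x ^ 2) := by
      rw [integral_add iyz2 iz'2, integral_add iy2 iz2, integral_const_mul, integral_const_mul,
        integral_const_mul]
    rw [e1] at hmono
    rw [e2] at hmono
    exact hmono
  -- final assembly
  have hlam2 : ν^2 + 2*a^2/ν^2 + 2*b^2/ν ≤ lam := lam_bound hν hlam
  rw [hIyz]
  exact final_arith hν hPpos hQpos hRpos hlam2 hbound
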